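/- arXiv:2509.10269 — 3 statements merged into one kernel-verified Lean document; each statement's English description precedes it below -/
import Mathlib

section
/- Let S and R be commutative rings that are finitely generated ℂ-algebras, and let φ : S → R be a ℂ-algebra homomorphism making R a finitely generated S-module. Assume: (i) for any two distinct maximal ideals m₁ ≠ m₂ of R, the preimages φ⁻¹(m₁) and φ⁻¹(m₂) are distinct maximal ideals of S; and (ii) for every maximal ideal m of R, writing n = φ⁻¹(m), the map n/n² → m/m² induced by φ is surjective. Then φ is surjective. -/
/-- **Lemma 4.7.** Let `S` and `R` be finitely generated `ℂ`-algebras and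
`φ : S →ₐ[ℂ] R` a `ℂ`-algebra homomorphism making `R` a finitely generated
`S`-module. If the preimages of distinct maximal ideals of `R` are distinct
maximal ideals of `S`, and for every maximal ideal `m` of `R` with
`n = φ⁻¹(m)` the induced map `n/n² → m/m²` is surjective, then `φ` is
surjective. -/
theorem stmt_0 (S R : Type*) [CommRing S] [CommRing R] [Algebra ℂ S] [Algebra ℂ R]
    (hS : Algebra.FiniteType ℂ S) (hR : Algebra.FiniteType ℂ R)
    (φ : S →ₐ[ℂ] R) (hfin : φ.toRingHom.Finite)
    (hclosed : ∀ m₁ m₂ : Ideal R, m₁.IsMaximal → m₂.IsMaximal → m₁ ≠ m₂ →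
      (m₁.comap φ).IsMaximal ∧ (m₂.comap φ).IsMaximal ∧ m₁.comap φ ≠ m₂.comap φ)
    (htangent : ∀ m : Ideal R, m.IsMaximal →
      Function.Surjective (Ideal.mapCotangent (m.comap φ) m φ le_rfl)) :
    Function.Surjective φ := by
  classical
  -- View `R` as an `S`-algebra via `φ`.
  letI : Algebra S R := φ.toRingHom.toAlgebra
  haveI hRfin : Module.Finite S R := hfin
  haveI : IsNoetherianRing R := Algebra.FiniteType.isNoetherianRing ℂ R
  have halg : algebraMap S R = φ.toRingHom := rfl
  -- The image of `φ` as an `S`-submodule of `R`.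
  set N : Submodule S R := LinearMap.range (Algebra.linearMap S R) with hN
  -- Key step: for every maximal ideal `n` of `S`, `R = φ(S) + nR`.
  have key : ∀ n : Ideal S, n.IsMaximal → (⊤ : Submodule S R) ≤ N ⊔ n • ⊤ := by
    intro n hn
    have hsmul : n • (⊤ : Submodule S R) = (n.map φ.toRingHom).restrictScalars S := by
      rw [Ideal.smul_top_eq_map, halg]
    set J : Ideal R := n.map φ.toRingHom with hJ
    by_cases hJtop : J = ⊤
    · intro r _
      apply Submodule.mem_sup_right
      rw [hsmul, hJtop]
      trivial
    -- `J ≠ ⊤`: there is a maximal ideal `m ⊇ J`, and it is unique.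
    obtain ⟨m, hm, hJm⟩ := Ideal.exists_le_maximal J hJtop
    have hcomap : ∀ m' : Ideal R, m'.IsMaximal → J ≤ m' → m'.comap φ = n := by
      intro m' hm' hJm'
      have h1 : n ≤ m'.comap φ := by
        intro s hs
        exact hJm' (Ideal.mem_map_of_mem _ hs)
      have h2 : m'.comap φ ≠ ⊤ := by
        intro h
        have : (1 : R) ∈ m' := by
          have : (1 : S) ∈ m'.comap φ := h ▸ Submodule.mem_top
          simpa using this
        exact hm'.ne_top (Ideal.eq_top_of_isUnit_mem _ this isUnit_one)
      exact (hn.eq_of_le h2 h1).symm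
    have huniq : ∀ m' : Ideal R, m'.IsMaximal → J ≤ m' → m' = m := by
      intro m' hm' hJm'
      by_contra hne
      obtain ⟨_, _, hneq⟩ := hclosed m' m hm' hm hne
      exact hneq ((hcomap m' hm' hJm').trans (hcomap m hm hJm).symm)
    -- Cotangent surjectivity: `m ≤ J ⊔ m²`.
    have hcot : m ≤ J ⊔ m ^ 2 := by
      intro x hx
      obtain ⟨y, hy⟩ := htangent m hm (m.toCotangent ⟨x, hx⟩)
      obtain ⟨⟨s, hs⟩, rfl⟩ := (m.comap φ).toCotangent_surjective y
      rw [Ideal.mapCotangent_toCotangent] at hy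
      have hsub : φ s - x ∈ m ^ 2 := by
        have := (Ideal.toCotangent_eq _).mp hy
        simpa using this
      have hφs : φ s ∈ J := by
        have hsn : s ∈ n := (hcomap m hm hJm) ▸ hs
        exact Ideal.mem_map_of_mem _ hsn
      have : x = φ s - (φ s - x) := by ring
      rw [this]
      exact sub_mem (Ideal.mem_sup_left hφs) (Ideal.mem_sup_right hsub)
    -- Pass to `Q = R ⧸ J` and apply Nakayama to `m̄ = m/J`.
    set Q := R ⧸ J with hQdef
    set mbar : Ideal Q := m.map (Ideal.Quotient.mk J) with hmbar
    have hmbar_sq : mbar = mbar ^ 2 := by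
      have h1 : mbar = Ideal.map (Ideal.Quotient.mk J) (J ⊔ m ^ 2) :=
        congrArg (Ideal.map (Ideal.Quotient.mk J)) (le_antisymm hcot (sup_le hJm (Ideal.pow_le_self two_ne_zero)))
      rwa [Ideal.map_sup, Ideal.map_quotient_self, Ideal.map_pow, bot_sup_eq] at h1
    have hjac : mbar ≤ Ideal.jacobson ⊥ := by
      apply le_sInf
      rintro K ⟨-, hK⟩
      have hKc : (K.comap (Ideal.Quotient.mk J)).IsMaximal :=
        Ideal.comap_isMaximal_of_surjective _ Ideal.Quotient.mk_surjective
      have hJK : J ≤ K.comap (Ideal.Quotient.mk J) := by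
        intro j hj
        have : Ideal.Quotient.mk J j = 0 := Ideal.Quotient.eq_zero_iff_mem.mpr hj
        simp only [Ideal.mem_comap, this]
        exact K.zero_mem
      have hKm : K.comap (Ideal.Quotient.mk J) = m := huniq _ hKc hJK
      have heq : mbar = K := by
        rw [hmbar, ← hKm, Ideal.map_comap_of_surjective _ Ideal.Quotient.mk_surjective]
      exact heq.le
    have hmbar_fg : mbar.FG := IsNoetherian.noetherian mbar
    have hmbar_bot : mbar = ⊥ := by
      apply Submodule.eq_bot_of_le_smul_of_le_jacobson_bot mbar mbar hmbar_fg _ hjac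
      rw [Ideal.smul_eq_mul, ← pow_two]
      exact hmbar_sq.le
    -- Hence `m = J`.
    have hmJ : m = J := by
      refine le_antisymm ?_ hJm
      intro x hx
      have : Ideal.Quotient.mk J x ∈ mbar := Ideal.mem_map_of_mem _ hx
      rw [hmbar_bot] at this
      exact Ideal.Quotient.eq_zero_iff_mem.mp this
    -- `Q = R/m` is a field, finitely generated over `ℂ`, hence equal to `ℂ`.
    haveI hJmax : J.IsMaximal := hmJ ▸ hm
    letI : Field Q := Ideal.Quotient.field J
    haveI : Algebra.FiniteType ℂ Q :=
      Algebra.FiniteType.of_surjective (Ideal.Quotient.mkₐ ℂ J)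
        Ideal.Quotient.mk_surjective
    haveI : Module.Finite ℂ Q := finite_of_finite_type_of_isJacobsonRing ℂ Q
    have hCsurj : Function.Surjective (algebraMap ℂ Q) :=
      IsAlgClosed.algebraMap_bijective_of_isIntegral.2
    -- Conclude: every `r : R` lies in `φ(S) + nR`.
    intro r _
    obtain ⟨c, hc⟩ := hCsurj (Ideal.Quotient.mk J r)
    have hcR : Ideal.Quotient.mk J (algebraMap ℂ R c) = Ideal.Quotient.mk J r := by
      rw [← hc]; rfl
    have hdiff : r - algebraMap ℂ R c ∈ J := by
      rw [← Ideal.Quotient.eq_zero_iff_mem, map_sub, hcR, sub_self]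
    have h1 : algebraMap ℂ R c ∈ N := by
      refine ⟨algebraMap ℂ S c, ?_⟩
      show algebraMap S R (algebraMap ℂ S c) = algebraMap ℂ R c
      rw [halg]
      exact φ.commutes c
    have h2 : r - algebraMap ℂ R c ∈ n • (⊤ : Submodule S R) := by
      rw [hsmul]
      exact hdiff
    have : r = algebraMap ℂ R c + (r - algebraMap ℂ R c) := by ring
    rw [this]
    exact Submodule.add_mem _ (Submodule.mem_sup_left h1) (Submodule.mem_sup_right h2)
  -- Global Nakayama-type argument: `N = ⊤`.
  have hNtop : N = ⊤ := by
    by_contra hne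
    haveI : IsCoatomic (Submodule S R) :=
      CompleteLattice.coatomic_of_top_compact
        ((Submodule.fg_iff_compact _).mp (Module.finite_def.mp hRfin))
    rcases eq_top_or_exists_le_coatom N with h | ⟨P, hP, hNP⟩
    · exact hne h
    haveI : IsSimpleModule S (R ⧸ P) := isSimpleModule_iff_isCoatom.mpr hP
    set n : Ideal S := Module.annihilator S (R ⧸ P) with hn
    have hnmax : n.IsMaximal := IsSimpleModule.annihilator_isMaximal
    have hsmulP : n • (⊤ : Submodule S R) ≤ P := by
      rw [Submodule.smul_le]
      intro s hs r _
      have := Module.mem_annihilator.mp hs (Submodule.Quotient.mk (p := P) r)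
      rwa [← Submodule.Quotient.mk_smul, Submodule.Quotient.mk_eq_zero] at this
    have : (⊤ : Submodule S R) ≤ P := (key n hnmax).trans (sup_le hNP hsmulP)
    exact hP.1 (top_le_iff.mp this)
  -- Finish.
  intro r
  have : r ∈ N := hNtop ▸ Submodule.mem_top
  obtain ⟨s, hs⟩ := this
  exact ⟨s, hs⟩
end

section
/- Let r ≥ 1 and let S = ℂ[[s₁, …, s_r]] be the formal power series ring in r variables over ℂ, with maximal ideal m = (s₁, …, s_r). Let J ⊆ I be ideals of S with I ⊆ m². Assume there exists an integer d ≥ 2 such that I ∩ m^d ⊆ m·I and such that J + m^d = I + m^d (as ideals of S). Then J = I. -/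
open MvPowerSeries Finset

noncomputable section StoppingAux

variable {r : ℕ}

/-- total degree of an exponent -/
def sdeg (e : Fin r →₀ ℕ) : ℕ := ∑ i, e i

lemma sdeg_add (u v : Fin r →₀ ℕ) : sdeg (u + v) = sdeg u + sdeg v := by
  simp [sdeg, Finsupp.add_apply, Finset.sum_add_distrib]

lemma apply_le_sdeg (e : Fin r →₀ ℕ) (i : Fin r) : e i ≤ sdeg e :=
  Finset.single_le_sum (fun _ _ => Nat.zero_le _) (mem_univ i)

lemma sdeg_single_one (i : Fin r) : sdeg (Finsupp.single i 1) = 1 := by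
  simp [sdeg, Finsupp.single_apply]

/-- the ideal of power series whose coefficients vanish in degrees `< n` -/
def lowv (r n : ℕ) : Ideal (MvPowerSeries (Fin r) ℂ) where
  carrier := {f | ∀ e, sdeg e < n → MvPowerSeries.coeff e f = 0}
  zero_mem' := by intro e _; simp
  add_mem' := by
    intro a b ha hb e he
    rw [map_add, ha e he, hb e he, add_zero]
  smul_mem' := by
    intro c f hf e he
    rw [smul_eq_mul, MvPowerSeries.coeff_mul]
    apply Finset.sum_eq_zero
    rintro ⟨u, v⟩ hp
    rw [Finset.HasAntidiagonal.mem_antidiagonal] at hp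
    have hv : sdeg v ≤ sdeg e := by
      rw [← hp, sdeg_add]; exact Nat.le_add_left _ _
    rw [hf v (lt_of_le_of_lt hv he), mul_zero]

lemma mem_lowv {n : ℕ} {f : MvPowerSeries (Fin r) ℂ} :
    f ∈ lowv r n ↔ ∀ e, sdeg e < n → MvPowerSeries.coeff e f = 0 := Iff.rfl

lemma lowv_mul (a b : ℕ) : lowv r a * lowv r b ≤ lowv r (a + b) := by
  rw [Ideal.mul_le]
  intro f hf g hg e he
  rw [MvPowerSeries.coeff_mul]
  apply Finset.sum_eq_zero
  rintro ⟨u, v⟩ hp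
  rw [Finset.HasAntidiagonal.mem_antidiagonal] at hp
  have : sdeg u + sdeg v < a + b := by rw [← sdeg_add, hp]; exact he
  rcases lt_or_ge (sdeg u) a with h | h
  · rw [hf u h, zero_mul]
  · rw [hg v (by omega), mul_zero]

lemma span_X_le_lowv_one :
    Ideal.span (Set.range (MvPowerSeries.X : Fin r → MvPowerSeries (Fin r) ℂ)) ≤ lowv r 1 := by
  rw [Ideal.span_le]
  rintro _ ⟨i, rfl⟩ e he
  classical
  rw [MvPowerSeries.coeff_X]
  have : e ≠ Finsupp.single i 1 := by
    intro h; rw [h, sdeg_single_one] at he; omega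
  simp [this]

lemma mpow_le_lowv (n : ℕ) :
    (Ideal.span (Set.range (MvPowerSeries.X : Fin r → MvPowerSeries (Fin r) ℂ))) ^ n ≤ lowv r n := by
  induction n with
  | zero =>
    intro f _
    exact fun e he => absurd he (Nat.not_lt_zero _)
  | succ n ih =>
    calc _ ^ (n+1) = _ ^ n * _ := pow_succ _ _
    _ ≤ lowv r n * lowv r 1 := Ideal.mul_mono ih span_X_le_lowv_one
    _ ≤ lowv r (n + 1) := lowv_mul n 1
open MvPowerSeries Finset in
lemma lowv_le_mpow {r : ℕ} (n : ℕ) :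
    lowv r n ≤ (Ideal.span (Set.range (MvPowerSeries.X : Fin r → MvPowerSeries (Fin r) ℂ))) ^ n := by
  classical
  induction n with
  | zero => simp [pow_zero, Ideal.one_eq_top]
  | succ n ih =>
    intro f hf
    -- decompose f = ∑ i, X i * f_i
    set g : Fin r → MvPowerSeries (Fin r) ℂ := fun i =>
      (fun e' => if ∀ j, j < i → e' j = 0 then f (e' + Finsupp.single i 1) else 0) with hg
    have hgmem : ∀ i, g i ∈ lowv r n := by
      intro i e he
      rw [MvPowerSeries.coeff_apply]
      simp only [hg]
      split_ifs with h
      · have : sdeg (e + Finsupp.single i 1) < n + 1 := by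
          rw [sdeg_add, sdeg_single_one]; omega
        exact hf _ this
      · rfl
    have hdecomp : f = ∑ i, MvPowerSeries.X i * g i := by
      apply MvPowerSeries.ext
      intro e
      rw [map_sum]
      have hterm : ∀ i, MvPowerSeries.coeff e (MvPowerSeries.X i * g i) =
          if Finsupp.single i 1 ≤ e then g i (e - Finsupp.single i 1) else 0 := by
        intro i
        rw [MvPowerSeries.X_def, MvPowerSeries.coeff_monomial_mul]
        split_ifs with h
        · rw [one_mul, MvPowerSeries.coeff_apply]
        · rfl
      by_cases he : e = 0
      · subst he
        have h0 : sdeg (0 : Fin r →₀ ℕ) < n + 1 := by simp [sdeg]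
        rw [hf 0 h0]
        symm
        apply Finset.sum_eq_zero
        intro i _
        rw [hterm i, if_neg]
        intro hle
        have := hle i
        simp [Finsupp.single_apply] at this
      · have hsupp : e.support.Nonempty := Finsupp.support_nonempty_iff.mpr he
        set i₀ := e.support.min' hsupp with hi₀
        have hi₀mem : i₀ ∈ e.support := e.support.min'_mem hsupp
        have hi₀ne : e i₀ ≠ 0 := Finsupp.mem_support_iff.mp hi₀mem
        have hmin : ∀ j, j < i₀ → e j = 0 := by
          intro j hj
          by_contra hje
          exact absurd (e.support.min'_le j (Finsupp.mem_support_iff.mpr hje)) (not_le.mpr hj)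
        rw [Finset.sum_eq_single_of_mem i₀ (mem_univ i₀)]
        · rw [hterm i₀, if_pos (by rw [Finsupp.single_le_iff]; omega)]
          simp only [hg]
          rw [if_pos, tsub_add_cancel_of_le (by rw [Finsupp.single_le_iff]; omega),
            MvPowerSeries.coeff_apply]
          intro j hj
          rw [Finsupp.tsub_apply, hmin j hj, Finsupp.single_apply,
            if_neg (by intro hij; exact absurd (hij ▸ hj) (lt_irrefl i₀))]
          rfl
        · intro i _ hii₀
          rw [hterm i]
          split_ifs with hle
          · simp only [hg]
            rw [if_neg]
            push_neg
            have hei : e i ≠ 0 := by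
              rw [Finsupp.single_le_iff] at hle; omega
            have : i₀ < i ∨ i₀ = i :=
              lt_or_eq_of_le (e.support.min'_le i (Finsupp.mem_support_iff.mpr hei))
            rcases this with h | h
            · refine ⟨i₀, h, ?_⟩
              rw [Finsupp.tsub_apply, Finsupp.single_apply,
                if_neg hii₀]
              omega
            · exact absurd h.symm hii₀
          · rfl
    rw [hdecomp]
    apply Ideal.sum_mem
    intro i _
    rw [pow_succ']
    exact Ideal.mul_mem_mul (Ideal.subset_span ⟨i, rfl⟩) (ih (hgmem i))

open MvPowerSeries Finset in
lemma low_congr_mul {r : ℕ} {e : Fin r →₀ ℕ} {g₁ g₂ h : MvPowerSeries (Fin r) ℂ}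
    (hc : ∀ u, sdeg u ≤ sdeg e → MvPowerSeries.coeff u g₁ = MvPowerSeries.coeff u g₂) :
    MvPowerSeries.coeff e (g₁ * h) = MvPowerSeries.coeff e (g₂ * h) := by
  classical
  rw [MvPowerSeries.coeff_mul, MvPowerSeries.coeff_mul]
  apply Finset.sum_congr rfl
  rintro ⟨u, v⟩ hp
  rw [Finset.HasAntidiagonal.mem_antidiagonal] at hp
  have : sdeg u ≤ sdeg e := by rw [← hp, sdeg_add]; exact Nat.le_add_right _ _
  rw [hc u this]
open MvPowerSeries Finset in
lemma reduce_fg {r : ℕ} (d : ℕ) (J : Ideal (MvPowerSeries (Fin r) ℂ)) :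
    ∃ (ι : Type) (_ : Fintype ι) (g : ι → MvPowerSeries (Fin r) ℂ),
      (∀ i, g i ∈ J) ∧
      J ≤ Ideal.span (Set.range g) ⊔
        (Ideal.span (Set.range (MvPowerSeries.X : Fin r → MvPowerSeries (Fin r) ℂ))) ^ d := by
  classical
  set S := MvPowerSeries (Fin r) ℂ
  set T := Fin r → Fin (d + 1)
  set conv : T → (Fin r →₀ ℕ) := fun t => Finsupp.equivFunOnFinite.symm (fun i => (t i : ℕ))
    with hconv
  set L : S →ₗ[ℂ] (T → ℂ) := LinearMap.pi (fun t => MvPowerSeries.coeff (conv t)) with hL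
  set V : Submodule ℂ (T → ℂ) := Submodule.map L (Submodule.restrictScalars ℂ J) with hV
  have hfg : V.FG := IsNoetherian.noetherian V
  obtain ⟨s, hs⟩ := hfg
  have hsV : ∀ y : {y // y ∈ s}, ∃ g : S, g ∈ J ∧ L g = (y : T → ℂ) := by
    rintro ⟨y, hy⟩
    have : y ∈ V := by rw [← hs]; exact Submodule.subset_span hy
    obtain ⟨g, hg, hgy⟩ := this
    exact ⟨g, hg, hgy⟩
  choose g hgJ hgL using hsV
  refine ⟨{y // y ∈ s}, inferInstance, g, hgJ, ?_⟩
  intro j hj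
  have hLj : L j ∈ V := ⟨j, hj, rfl⟩
  rw [← hs] at hLj
  obtain ⟨c, -, hc⟩ := Submodule.mem_span_finset.mp hLj
  set w : S := ∑ y ∈ s.attach, c (y : T → ℂ) • g y with hw
  have hLw : L w = L j := by
    rw [hw, map_sum, ← hc, ← Finset.sum_attach s (fun y => c y • y)]
    apply Finset.sum_congr rfl
    intro y _
    rw [map_smul, hgL]
  have hwmem : w ∈ Ideal.span (Set.range g) := by
    apply Submodule.sum_mem
    intro y _
    rw [Algebra.smul_def]
    exact Ideal.mul_mem_left _ _ (Ideal.subset_span ⟨y, rfl⟩)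
  have hsub : j - w ∈ lowv r d := by
    intro e he
    have het : ∀ i, e i < d + 1 := fun i => lt_of_le_of_lt (apply_le_sdeg e i) (by omega)
    set t : T := fun i => ⟨e i, het i⟩ with ht
    have hconvt : conv t = e := by
      ext i
      simp [hconv, ht]
    have : (L j) t = (L w) t := by rw [hLw]
    rw [hL] at this
    simp only [LinearMap.pi_apply, hconvt] at this
    rw [map_sub, this, sub_self]
  have : j = w + (j - w) := by ring
  rw [this]
  exact Submodule.add_mem _ (Submodule.mem_sup_left hwmem)
    (Submodule.mem_sup_right (lowv_le_mpow d hsub))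
set_option maxHeartbeats 1000000 in
open MvPowerSeries Finset in
lemma main_nakayama {r : ℕ} (I K : Ideal (MvPowerSeries (Fin r) ℂ))
    {ι : Type} [Fintype ι] (g : ι → MvPowerSeries (Fin r) ℂ)
    (hK : K = Ideal.span (Set.range g))
    (hIK : I ≤ K ⊔ Ideal.span (Set.range (MvPowerSeries.X : Fin r → MvPowerSeries (Fin r) ℂ)) * I) :
    I ≤ K := by
  classical
  set m : Ideal (MvPowerSeries (Fin r) ℂ) := Ideal.span (Set.range (MvPowerSeries.X : Fin r → MvPowerSeries (Fin r) ℂ))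
    with hm
  intro x hx
  have hstep : ∀ (n : ℕ) (z : MvPowerSeries (Fin r) ℂ), z ∈ m ^ n * I →
      ∃ (a : ι →₀ MvPowerSeries (Fin r) ℂ) (z' : MvPowerSeries (Fin r) ℂ), (∀ i, a i ∈ m ^ n) ∧ z' ∈ m ^ (n + 1) * I ∧
        (a.sum fun i c => c • g i) + z' = z := by
    intro n z hz
    have hle : m ^ n * I ≤ m ^ n * K ⊔ m ^ (n + 1) * I := by
      calc m ^ n * I ≤ m ^ n * (K ⊔ m * I) := Ideal.mul_mono_right hIK
      _ = m ^ n * K ⊔ m ^ n * (m * I) := Ideal.mul_sup _ _ _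
      _ = m ^ n * K ⊔ m ^ (n + 1) * I := by rw [← mul_assoc, ← pow_succ]
    obtain ⟨y, hy, z', hz', hyz⟩ := Submodule.mem_sup.mp (hle hz)
    have hy' : y ∈ (m ^ n) • Submodule.span (MvPowerSeries (Fin r) ℂ) (Set.range g) := by
      rw [Ideal.smul_eq_mul, ← Ideal.span, ← hK]
      exact hy
    obtain ⟨a, ha, hay⟩ := (Submodule.mem_ideal_smul_span_iff_exists_sum (m ^ n) g y).mp hy'
    exact ⟨a, z', ha, hz', by rw [hay]; exact hyz⟩
  choose af zf haf hzf hsum using hstep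
  let Z : (n : ℕ) → {z : MvPowerSeries (Fin r) ℂ // z ∈ m ^ n * I} := fun n =>
    Nat.rec ⟨x, by rwa [pow_zero, Ideal.one_eq_top, Ideal.top_mul]⟩
      (fun k p => ⟨zf k p.1 p.2, hzf k p.1 p.2⟩) n
  let A : ℕ → ι →₀ MvPowerSeries (Fin r) ℂ := fun n => af n (Z n).1 (Z n).2
  have hZsucc : ∀ n, ((A n).sum fun i c => c • g i) + (Z (n + 1)).1 = (Z n).1 :=
    fun n => hsum n (Z n).1 (Z n).2
  have hA : ∀ n i, A n i ∈ m ^ n := fun n i => haf n (Z n).1 (Z n).2 i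
  have hAlow : ∀ n i e, sdeg e < n → MvPowerSeries.coeff e (A n i) = 0 :=
    fun n i e he => mpow_le_lowv n (hA n i) e he
  have hpart : ∀ N, x = (∑ n ∈ range N, (A n).sum fun i c => c • g i) + (Z N).1 := by
    intro N
    induction N with
    | zero => simp only [range_zero, sum_empty, zero_add]; rfl
    | succ N ihN =>
      calc x = (∑ n ∈ range N, (A n).sum fun i c => c • g i) + (Z N).1 := ihN
      _ = (∑ n ∈ range N, (A n).sum fun i c => c • g i)
          + (((A N).sum fun i c => c • g i) + (Z (N + 1)).1) := by rw [hZsucc N]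
      _ = _ := by rw [sum_range_succ, add_assoc]
  let Φ : ι → MvPowerSeries (Fin r) ℂ := fun i =>
    (fun e => ∑ n ∈ range (sdeg e + 1), MvPowerSeries.coeff e (A n i) : MvPowerSeries (Fin r) ℂ)
  have hΦ : ∀ i e, MvPowerSeries.coeff e (Φ i)
      = ∑ n ∈ range (sdeg e + 1), MvPowerSeries.coeff e (A n i) := fun i e => rfl
  have hΦlow : ∀ (i : ι) (u : Fin r →₀ ℕ) (N : ℕ), sdeg u < N →
      MvPowerSeries.coeff u (Φ i) = MvPowerSeries.coeff u (∑ n ∈ range N, A n i) := by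
    intro i u N hN
    rw [map_sum, hΦ]
    apply Finset.sum_subset (range_subset_range.mpr (by omega))
    intro k _ hk'
    rw [mem_range] at hk'
    exact hAlow k i u (by omega)
  have hxsum : x = ∑ i : ι, Φ i * g i := by
    apply MvPowerSeries.ext
    intro e
    set N := sdeg e + 1 with hN
    have hZ0 : MvPowerSeries.coeff e (Z N).1 = 0 :=
      mpow_le_lowv N (Ideal.mul_le_left (Z N).2) e (by omega)
    calc MvPowerSeries.coeff e x
        = MvPowerSeries.coeff e ((∑ n ∈ range N, (A n).sum fun i c => c • g i) + (Z N).1) := by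
          rw [← hpart N]
      _ = ∑ n ∈ range N, MvPowerSeries.coeff e ((A n).sum fun i c => c • g i) := by
          rw [map_add, hZ0, add_zero, map_sum]
      _ = ∑ n ∈ range N, MvPowerSeries.coeff e (∑ i : ι, A n i * g i) := by
          apply Finset.sum_congr rfl
          intro n _
          rw [Finsupp.sum_fintype _ _ (fun i => zero_smul (MvPowerSeries (Fin r) ℂ) (g i))]
          simp only [smul_eq_mul]
      _ = ∑ n ∈ range N, ∑ i : ι, MvPowerSeries.coeff e (A n i * g i) := by
          apply Finset.sum_congr rfl
          intro n _
          rw [map_sum]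
      _ = ∑ i : ι, ∑ n ∈ range N, MvPowerSeries.coeff e (A n i * g i) := Finset.sum_comm
      _ = ∑ i : ι, MvPowerSeries.coeff e ((∑ n ∈ range N, A n i) * g i) := by
          apply Finset.sum_congr rfl
          intro i _
          rw [Finset.sum_mul, map_sum]
      _ = ∑ i : ι, MvPowerSeries.coeff e (Φ i * g i) := by
          apply Finset.sum_congr rfl
          intro i _
          exact (low_congr_mul (fun u hu => hΦlow i u N (by omega))).symm
      _ = MvPowerSeries.coeff e (∑ i : ι, Φ i * g i) := (map_sum _ _ _).symm
  rw [hxsum, hK]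
  exact Submodule.sum_mem _ fun i _ =>
    Ideal.mul_mem_left _ _ (Ideal.subset_span ⟨i, rfl⟩)

/-- **Proposition 5.3(2), commutative algebra core.** Let
`S = ℂ[[s₁, …, s_r]]` with maximal ideal `m = (s₁, …, s_r)`, and let
`J ⊆ I ⊆ m²` be ideals. If for some `d ≥ 2` we have `I ∩ m^d ⊆ m·I` and
`J + m^d = I + m^d`, then `J = I`. -/
theorem stmt_3 (r : ℕ) (hr : 1 ≤ r)
    (m I J : Ideal (MvPowerSeries (Fin r) ℂ))
    (hm : m = Ideal.span (Set.range (MvPowerSeries.X : Fin r → MvPowerSeries (Fin r) ℂ)))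
    (hJI : J ≤ I) (hIm : I ≤ m ^ 2)
    (d : ℕ) (hd : 2 ≤ d)
    (h1 : I ⊓ m ^ d ≤ m * I)
    (h2 : J ⊔ m ^ d = I ⊔ m ^ d) :
    J = I := by
  classical
  obtain ⟨ι, instι, g, hgJ, hJg⟩ := reduce_fg d J
  set K : Ideal (MvPowerSeries (Fin r) ℂ) := Ideal.span (Set.range g) with hKdef
  have hKJ : K ≤ J := Ideal.span_le.mpr (by rintro _ ⟨i, rfl⟩; exact hgJ i)
  have hIKd : I ≤ K ⊔ m ^ d := by
    intro x hxI
    have hx2 : x ∈ J ⊔ m ^ d := by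
      rw [h2]; exact Submodule.mem_sup_left hxI
    have hJK : J ≤ K ⊔ m ^ d := by rw [hm]; exact hJg
    exact (sup_le hJK le_sup_right) hx2
  have hIK : I ≤ K ⊔ m * I := by
    intro x hxI
    obtain ⟨k, hk, y, hy, hky⟩ := Submodule.mem_sup.mp (hIKd hxI)
    have hyI : y ∈ I := by
      have hxy : y = x - k := by rw [← hky]; ring
      rw [hxy]
      exact Submodule.sub_mem _ hxI (hJI (hKJ hk))
    exact Submodule.mem_sup.mpr ⟨k, hk, y, h1 ⟨hyI, hy⟩, hky⟩
  have hIle : I ≤ K := by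
    refine main_nakayama I K g hKdef ?_
    rw [← hm]
    exact hIK
  exact le_antisymm hJI (hIle.trans hKJ)
end StoppingAux
end

section
/- Let n₁ ≥ 3 and n₂ ≥ 3 be integers. Let a₁, …, a_{n₁−2} ∈ ℂ, b ∈ ℂ, and c₁, …, c_{n₂−1} ∈ ℂ. Let M be the 2 × (n₁+n₂−2) complex matrix whose first row is (a_{n₁−2}, a_{n₁−3}, …, a₁, b, c₁, …, c_{n₂−2}) and whose second row is (0, …, 0, c₁, c₂, …, c_{n₂−1}), where the second row begins with n₁−2 zeros. Then: (i) M has rank 0 if and only if all of the a_i, b, and c_j are zero; and (ii) M has rank ≤ 1 if and only if either (c_j = 0 for all 1 ≤ j ≤ n₂−1), or (a_i = 0 for all 1 ≤ i ≤ n₁−2 and there exist λ, μ ∈ ℂ with b = λ^{n₂−1} and c_j = λ^{n₂−1−j} · μ^{j} for all 1 ≤ j ≤ n₂−1). In every other case M has rank 2. -/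
open Module Submodule

lemma myrank_zero_iff {n : ℕ} (M : Matrix (Fin 2) (Fin n) ℂ) :
    M.rank = 0 ↔ ∀ i j, M i j = 0 := by
  constructor
  · intro h i j
    rw [Matrix.rank_eq_finrank_span_row] at h
    have hsp : Submodule.span ℂ (Set.range M) = ⊥ := Submodule.finrank_eq_zero.mp h
    have hmem : M i ∈ Submodule.span ℂ (Set.range M) := Submodule.subset_span ⟨i, rfl⟩
    rw [hsp, Submodule.mem_bot] at hmem
    exact congrFun hmem j
  · intro h
    have : M = 0 := by ext i j; exact h i j
    rw [this, Matrix.rank_zero]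

lemma myrank_le_one_iff {n : ℕ} (M : Matrix (Fin 2) (Fin n) ℂ) :
    M.rank ≤ 1 ↔ ∀ j k, M 0 j * M 1 k = M 0 k * M 1 j := by
  constructor
  · intro h j k
    by_contra hne
    set B : Matrix (Fin 2) (Fin 2) ℂ := M.submatrix id ![j, k] with hB
    have hdet : B.det ≠ 0 := by
      rw [Matrix.det_fin_two]
      simpa [hB] using sub_ne_zero.mpr hne
    have hBrank : B.rank = 2 := by
      rw [Matrix.rank_of_isUnit B ((Matrix.isUnit_iff_isUnit_det B).mpr
        (isUnit_iff_ne_zero.mpr hdet))]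
      simp
    have hBP : B = M * (Matrix.of fun (x : Fin n) (l : Fin 2) =>
        if x = ![j,k] l then (1:ℂ) else 0) := by
      ext i l
      simp [hB, Matrix.mul_apply]
    have hle : B.rank ≤ M.rank := by
      rw [hBP]; exact Matrix.rank_mul_le_left M _
    omega
  · intro hc
    rw [Matrix.rank_eq_finrank_span_row]
    obtain ⟨v, α, β, h0, h1⟩ : ∃ (v : Fin n → ℂ) (α β : ℂ), M 0 = α • v ∧ M 1 = β • v := by
      by_cases h1 : ∀ k, M 1 k = 0
      · exact ⟨M 0, 1, 0, by simp, by funext k; simp [h1 k]⟩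
      · push_neg at h1; obtain ⟨k₀, hk₀⟩ := h1
        refine ⟨M 1, M 0 k₀ / M 1 k₀, 1, ?_, by simp⟩
        funext j
        have h := hc j k₀
        simp only [Pi.smul_apply, smul_eq_mul]
        field_simp
        linear_combination h
    have hle : Submodule.span ℂ (Set.range M) ≤ Submodule.span ℂ {v} := by
      rw [Submodule.span_le]
      rintro x ⟨i, rfl⟩
      fin_cases i
      · show M 0 ∈ _
        rw [h0]
        exact Submodule.smul_mem _ _ (Submodule.mem_span_singleton_self v)
      · show M 1 ∈ _
        rw [h1]
        exact Submodule.smul_mem _ _ (Submodule.mem_span_singleton_self v)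
    refine (Submodule.finrank_mono hle).trans ?_
    refine (finrank_span_le_card _).trans ?_
    simp

/-- **Lemma 8.3 (linear algebra content).** For `n₁, n₂ ≥ 3`, coefficients
`a₁, …, a_{n₁−2}`, `b`, `c₁, …, c_{n₂−1} ∈ ℂ`, let `M` be the `2`-row matrix
with first row `(a_{n₁−2}, …, a₁, b, c₁, …, c_{n₂−2})` and second row
`(0, …, 0, c₁, …, c_{n₂−1})` (with `n₁−2` initial zeros). Then `M` has
rank `0` iff all coefficients vanish; rank `≤ 1` iff either all `c_j`
vanish, or all `a_i` vanish and `b = λ^{n₂−1}`, `c_j = λ^{n₂−1−j} μ^j` for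
some `λ, μ ∈ ℂ`; and in every other case `M` has rank `2`. -/
theorem stmt_6 (n₁ n₂ : ℕ) (hn₁ : 3 ≤ n₁) (hn₂ : 3 ≤ n₂)
    (a : ℕ → ℂ) (b : ℂ) (c : ℕ → ℂ)
    (M : Matrix (Fin 2) (Fin (n₁ + n₂ - 3)) ℂ)
    (hM0 : ∀ j : Fin (n₁ + n₂ - 3),
      M 0 j = if j.val < n₁ - 2 then a (n₁ - 2 - j.val)
        else if j.val = n₁ - 2 then b else c (j.val - (n₁ - 2)))
    (hM1 : ∀ j : Fin (n₁ + n₂ - 3),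
      M 1 j = if j.val < n₁ - 2 then 0 else c (j.val - (n₁ - 2) + 1)) :
    (M.rank = 0 ↔
      (∀ i, 1 ≤ i → i ≤ n₁ - 2 → a i = 0) ∧ b = 0 ∧
        (∀ j, 1 ≤ j → j ≤ n₂ - 1 → c j = 0)) ∧
    (M.rank ≤ 1 ↔
      ((∀ j, 1 ≤ j → j ≤ n₂ - 1 → c j = 0) ∨
        ((∀ i, 1 ≤ i → i ≤ n₁ - 2 → a i = 0) ∧ ∃ lam mu : ℂ,
          b = lam ^ (n₂ - 1) ∧
            ∀ j, 1 ≤ j → j ≤ n₂ - 1 → c j = lam ^ (n₂ - 1 - j) * mu ^ j))) ∧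
    (¬ ((∀ j, 1 ≤ j → j ≤ n₂ - 1 → c j = 0) ∨
        ((∀ i, 1 ≤ i → i ≤ n₁ - 2 → a i = 0) ∧ ∃ lam mu : ℂ,
          b = lam ^ (n₂ - 1) ∧
            ∀ j, 1 ≤ j → j ≤ n₂ - 1 → c j = lam ^ (n₂ - 1 - j) * mu ^ j)) →
      M.rank = 2) := by
  -- key equivalence: cross products vanish iff the disjunctive condition holds
  have key : (∀ j k, M 0 j * M 1 k = M 0 k * M 1 j) ↔
      ((∀ j, 1 ≤ j → j ≤ n₂ - 1 → c j = 0) ∨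
        ((∀ i, 1 ≤ i → i ≤ n₁ - 2 → a i = 0) ∧ ∃ lam mu : ℂ,
          b = lam ^ (n₂ - 1) ∧
            ∀ j, 1 ≤ j → j ≤ n₂ - 1 → c j = lam ^ (n₂ - 1 - j) * mu ^ j)) := by
    constructor
    · intro hCr
      by_cases hCZ : ∀ j, 1 ≤ j → j ≤ n₂ - 1 → c j = 0
      · exact Or.inl hCZ
      right
      push_neg at hCZ
      obtain ⟨k, hk1, hk2, hk3⟩ := hCZ
      have hMK : M 1 ⟨n₁ - 2 + k - 1, by omega⟩ = c k := by
        rw [hM1]; simp only [Fin.val_mk]; rw [if_neg (by omega)]; congr 1; omega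
      have hAZ : ∀ i, 1 ≤ i → i ≤ n₁ - 2 → a i = 0 := by
        intro i h1 h2
        have h := hCr ⟨n₁ - 2 - i, by omega⟩ ⟨n₁ - 2 + k - 1, by omega⟩
        rw [hMK] at h
        have hz : M 1 ⟨n₁ - 2 - i, by omega⟩ = 0 := by
          rw [hM1]; simp only [Fin.val_mk]; rw [if_pos (by omega)]
        rw [hz, mul_zero] at h
        have h0 : M 0 ⟨n₁ - 2 - i, by omega⟩ = a i := by
          rw [hM0]; simp only [Fin.val_mk]; rw [if_pos (by omega)]; congr 1; omega
        rw [h0] at h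
        rcases mul_eq_zero.mp h with h | h
        · exact h
        · exact absurd h hk3
      refine ⟨hAZ, ?_⟩
      have r0c : ∀ x, 1 ≤ x → (h2 : x ≤ n₂ - 2) → M 0 ⟨n₁ - 2 + x, by omega⟩ = c x := by
        intro x h1 h2
        rw [hM0]; simp only [Fin.val_mk]
        rw [if_neg (by omega), if_neg (by omega)]; congr 1; omega
      have r0b : M 0 ⟨n₁ - 2, by omega⟩ = b := by
        rw [hM0]; simp only [Fin.val_mk]; rw [if_neg (by omega), if_pos trivial]
      have r1c : ∀ x, (h2 : x ≤ n₂ - 2) → M 1 ⟨n₁ - 2 + x, by omega⟩ = c (x + 1) := by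
        intro x h2
        rw [hM1]; simp only [Fin.val_mk]; rw [if_neg (by omega)]; congr 1; omega
      have hcq : c (n₂ - 1) ≠ 0 := by
        intro hq0
        have key2 : ∀ x, 1 ≤ x → x ≤ n₂ - 2 → c (x + 1) = 0 → c x = 0 := by
          intro x h1 h2 h3
          have h := hCr ⟨n₁ - 2 + x - 1, by omega⟩ ⟨n₁ - 2 + x, by omega⟩
          have e1 : M 1 ⟨n₁ - 2 + x - 1, by omega⟩ = c x := by
            rw [hM1]; simp only [Fin.val_mk]; rw [if_neg (by omega)]; congr 1; omega
          rw [e1, r1c x h2, h3, mul_zero, r0c x h1 h2] at h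
          exact mul_self_eq_zero.mp h.symm
        have down : ∀ m x, 1 ≤ x → x ≤ n₂ - 1 → n₂ - 1 ≤ x + m → c x = 0 := by
          intro m
          induction m with
          | zero =>
            intro x h1 h2 h3
            have hx : x = n₂ - 1 := by omega
            rw [hx]; exact hq0
          | succ m ih =>
            intro x h1 h2 h3
            by_cases h4 : n₂ - 1 ≤ x + m
            · exact ih x h1 h2 h4
            · exact key2 x h1 (by omega) (ih (x + 1) (by omega) (by omega) (by omega))
        exact hk3 (down (n₂ - 1) k hk1 hk2 (by omega))
      have rel : ∀ x, (h2 : x ≤ n₂ - 2) →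
          M 0 ⟨n₁ - 2 + x, by omega⟩ * c (n₂ - 1) = c (n₂ - 2) * c (x + 1) := by
        intro x h2
        have h := hCr ⟨n₁ - 2 + x, by omega⟩ ⟨n₁ - 2 + (n₂ - 2), by omega⟩
        rw [r1c x h2, r1c (n₂ - 2) le_rfl, r0c (n₂ - 2) (by omega) le_rfl] at h
        rw [show n₂ - 2 + 1 = n₂ - 1 from by omega] at h
        exact h
      set t := c (n₂ - 2) / c (n₂ - 1) with ht
      have ratio : ∀ x, 1 ≤ x → x ≤ n₂ - 2 → c x = t * c (x + 1) := by
        intro x h1 h2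
        have h := rel x h2
        rw [r0c x h1 h2] at h
        rw [ht, div_mul_eq_mul_div, eq_div_iff hcq]
        linear_combination h
      have ratiob : b = t * c 1 := by
        have h := rel 0 (by omega)
        simp only [Nat.add_zero, Nat.zero_add] at h
        rw [r0b] at h
        rw [ht, div_mul_eq_mul_div, eq_div_iff hcq]
        linear_combination h
      have cform : ∀ x, 1 ≤ x → x ≤ n₂ - 1 → c x = t ^ (n₂ - 1 - x) * c (n₂ - 1) := by
        have down : ∀ m x, 1 ≤ x → x ≤ n₂ - 1 → n₂ - 1 ≤ x + m →
            c x = t ^ (n₂ - 1 - x) * c (n₂ - 1) := by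
          intro m
          induction m with
          | zero =>
            intro x h1 h2 h3
            have hx : x = n₂ - 1 := by omega
            rw [hx]; simp
          | succ m ih =>
            intro x h1 h2 h3
            by_cases h4 : n₂ - 1 ≤ x + m
            · exact ih x h1 h2 h4
            · have h5 : x ≤ n₂ - 2 := by omega
              rw [ratio x h1 h5, ih (x + 1) (by omega) (by omega) (by omega)]
              rw [show n₂ - 1 - x = (n₂ - 1 - (x + 1)) + 1 from by omega, pow_succ]
              ring
        intro x h1 h2; exact down (n₂ - 1) x h1 h2 (by omega)
      have bform : b = t ^ (n₂ - 1) * c (n₂ - 1) := by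
        rw [ratiob, cform 1 le_rfl (by omega)]
        have e : t ^ (n₂ - 1) = t ^ (n₂ - 2) * t := by
          rw [← pow_succ]; congr 1; omega
        rw [e, show n₂ - 1 - 1 = n₂ - 2 from by omega]
        ring
      obtain ⟨s, hs⟩ := IsAlgClosed.exists_pow_nat_eq (c (n₂ - 1)) (n := n₂ - 1) (by omega)
      refine ⟨t * s, s, ?_, ?_⟩
      · rw [bform, ← hs, ← mul_pow]
      · intro x h1 h2
        rw [cform x h1 h2, ← hs]
        have hsp : s ^ (n₂ - 1) = s ^ (n₂ - 1 - x) * s ^ x := by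
          rw [← pow_add]; congr 1; omega
        rw [hsp, mul_pow]
        ring
    · rintro (hCZ | ⟨hAZ, lam, mu, hb, hclm⟩)
      · have z1 : ∀ j, M 1 j = 0 := by
          intro j
          have hj := j.isLt
          rw [hM1 j]
          split_ifs with h
          · rfl
          · exact hCZ _ (by omega) (by omega)
        intro j k
        rw [z1 j, z1 k]
        ring
      · have V0 : ∀ j : Fin (n₁ + n₂ - 3), M 0 j =
            if j.val < n₁ - 2 then 0
            else lam ^ (n₂ - 1 - (j.val - (n₁ - 2))) * mu ^ (j.val - (n₁ - 2)) := by
          intro j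
          have hj := j.isLt
          rw [hM0 j]
          split_ifs with h1 h2
          · exact hAZ _ (by omega) (by omega)
          · have h0 : j.val - (n₁ - 2) = 0 := by omega
            rw [h0, hb]; simp
          · exact hclm _ (by omega) (by omega)
        have V1 : ∀ j : Fin (n₁ + n₂ - 3), M 1 j =
            if j.val < n₁ - 2 then 0
            else lam ^ (n₂ - 1 - (j.val - (n₁ - 2) + 1)) * mu ^ (j.val - (n₁ - 2) + 1) := by
          intro j
          have hj := j.isLt
          rw [hM1 j]
          split_ifs with h1
          · rfl
          · exact hclm _ (by omega) (by omega)
        intro j k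
        have hj := j.isLt
        have hk := k.isLt
        rw [V0 j, V0 k, V1 j, V1 k]
        set X := j.val - (n₁ - 2) with hX'
        set Y := k.val - (n₁ - 2) with hY'
        have hXb : X ≤ n₂ - 2 := by omega
        have hYb : Y ≤ n₂ - 2 := by omega
        split_ifs with h1 h2 h3
        · ring
        · ring
        · ring
        have eL : lam ^ (n₂ - 1 - X) * mu ^ X * (lam ^ (n₂ - 1 - (Y + 1)) * mu ^ (Y + 1)) =
            lam ^ ((n₂ - 1 - X) + (n₂ - 1 - (Y + 1))) * mu ^ (X + (Y + 1)) := by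
          rw [pow_add, pow_add]; ring
        have eR : lam ^ (n₂ - 1 - Y) * mu ^ Y * (lam ^ (n₂ - 1 - (X + 1)) * mu ^ (X + 1)) =
            lam ^ ((n₂ - 1 - Y) + (n₂ - 1 - (X + 1))) * mu ^ (Y + (X + 1)) := by
          rw [pow_add, pow_add]; ring
        rw [eL, eR, show (n₂ - 1 - X) + (n₂ - 1 - (Y + 1)) =
            (n₂ - 1 - Y) + (n₂ - 1 - (X + 1)) from by omega,
          show X + (Y + 1) = Y + (X + 1) from by omega]
  refine ⟨?_, ?_, ?_⟩
  · rw [myrank_zero_iff]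
    constructor
    · intro h
      refine ⟨fun i h1 h2 => ?_, ?_, fun x h1 h2 => ?_⟩
      · have hx := h 0 ⟨n₁ - 2 - i, by omega⟩
        rw [hM0] at hx
        simp only [Fin.val_mk] at hx
        rw [if_pos (by omega)] at hx
        rw [show n₁ - 2 - (n₁ - 2 - i) = i from by omega] at hx
        exact hx
      · have hx := h 0 ⟨n₁ - 2, by omega⟩
        rw [hM0] at hx
        simp only [Fin.val_mk] at hx
        rw [if_neg (by omega), if_pos trivial] at hx
        exact hx
      · have hx := h 1 ⟨n₁ - 2 + x - 1, by omega⟩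
        rw [hM1] at hx
        simp only [Fin.val_mk] at hx
        rw [if_neg (by omega)] at hx
        rw [show n₁ - 2 + x - 1 - (n₁ - 2) + 1 = x from by omega] at hx
        exact hx
    · rintro ⟨hA, hb0, hC⟩ i j
      have hj := j.isLt
      rcases i with ⟨iv, hi2⟩
      interval_cases iv
      · exact (hM0 j).trans (by
          split_ifs with h1 h2
          · exact hA _ (by omega) (by omega)
          · exact hb0
          · exact hC _ (by omega) (by omega))
      · exact (hM1 j).trans (by
          split_ifs with h1
          · rfl
          · exact hC _ (by omega) (by omega))
  · rw [myrank_le_one_iff]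
    exact key
  · intro hnot
    have hub : M.rank ≤ 2 := by simpa using M.rank_le_card_height
    have h1 : ¬ M.rank ≤ 1 := fun h => hnot (key.mp ((myrank_le_one_iff M).mp h))
    omega
end
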